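/- Let (f₁,…,f_n) be a basis of a subgroup N of ℤ^n with 2ℤ^n ⊆ N, let M be the matrix with columns f_i, and let E ⊆ {0,1}^n be the set of ε such that Mε ∈ 2ℤ^n. Then the set of lattice points of ℤ^n contained in the half-open fundamental parallelotope { Σ_i x_i f_i : 0 ≤ x_i < 1 } is exactly { (1/2) Σ_i ε_i f_i : ε ∈ E }, and this set has cardinality |det M| = 2^{k₀} where 2^{k₀} = [ℤ^n : N]. -/

import Mathlib

open scoped BigOperators

/-- `E`: the subset of `{0,1}^n` of vectors `ε` with `Mε ∈ 2ℤ^n` (the lift of the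
kernel of `M mod 2` on `𝔽₂^n`). -/
def Eset {n : ℕ} (M : Matrix (Fin n) (Fin n) ℤ) : Set (Fin n → ℤ) :=
  {ε | (∀ i, ε i = 0 ∨ ε i = 1) ∧ ∀ j, (2 : ℤ) ∣ M.mulVec ε j}

/-- The lattice points inside the half-open fundamental parallelotope
`{ Σ_i x_i f_i : 0 ≤ x_i < 1 }` of the columns `f_i` of `M`. -/
def parPoints {n : ℕ} (M : Matrix (Fin n) (Fin n) ℤ) : Set (Fin n → ℤ) :=
  {v | ∃ x : Fin n → ℝ, (∀ i, 0 ≤ x i ∧ x i < 1) ∧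
    ∀ j, (v j : ℝ) = ∑ i, x i * (M j i : ℝ)}

section Aux

variable {n : ℕ} (M : Matrix (Fin n) (Fin n) ℤ)

lemma aux_span_toAdd (a : ℤ) : (Ideal.span {a}).toAddSubgroup = AddSubgroup.zmultiples a := by
  ext x
  simp only [Submodule.mem_toAddSubgroup, Ideal.mem_span_singleton,
    AddSubgroup.mem_zmultiples_iff]
  constructor
  · rintro ⟨c, rfl⟩; exact ⟨c, by rw [smul_eq_mul]; ring⟩
  · rintro ⟨c, rfl⟩; exact ⟨c, by rw [smul_eq_mul]; ring⟩

lemma aux_card_quot_eq_detAbs (hinj : Function.Injective M.mulVecLin) :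
    Nat.card ((Fin n → ℤ) ⧸ LinearMap.range M.mulVecLin) = M.det.natAbs := by
  classical
  set N := LinearMap.range M.mulVecLin with hNdef
  obtain ⟨m, snf⟩ := N.smithNormalForm (Pi.basisFun ℤ (Fin n))
  have hm : n = m := by
    have h1 : Module.finrank ℤ N = m := Module.finrank_eq_card_basis snf.bN |>.trans (by simp)
    have h2 : Module.finrank ℤ N = n := by
      have e : (Fin n → ℤ) ≃ₗ[ℤ] N := LinearEquiv.ofInjective M.mulVecLin hinj
      rw [← e.finrank_eq]; simp
    omega
  subst hm
  -- index computation
  have hidx : Nat.card ((Fin n → ℤ) ⧸ N) = ∏ i, (snf.a i).natAbs := by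
    have := snf.toAddSubgroup_index_eq_pow_mul_prod
    rw [show Nat.card ((Fin n → ℤ) ⧸ N) = N.toAddSubgroup.index from rfl, this]
    simp [aux_span_toAdd, Int.index_zmultiples]
  rw [hidx]
  -- determinant computation
  have hfbij : Function.Bijective snf.f := (Finite.injective_iff_bijective).mp snf.f.injective
  let σ : Fin n ≃ Fin n := Equiv.ofBijective snf.f hfbij
  let e2 : (Fin n → ℤ) ≃ₗ[ℤ] N := snf.bM.equiv snf.bN σ.symm
  let e1 : (Fin n → ℤ) ≃ₗ[ℤ] N := LinearEquiv.ofInjective M.mulVecLin hinj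
  have hassoc : Associated (LinearMap.det ((N.subtype).comp (e1 : (Fin n → ℤ) →ₗ[ℤ] N)))
      (LinearMap.det ((N.subtype).comp (e2 : (Fin n → ℤ) →ₗ[ℤ] N))) :=
    LinearMap.associated_det_comp_equiv N.subtype e1 e2
  have hd1 : LinearMap.det ((N.subtype).comp (e1 : (Fin n → ℤ) →ₗ[ℤ] N)) = M.det := by
    have : (N.subtype).comp (e1 : (Fin n → ℤ) →ₗ[ℤ] N) = M.mulVecLin := by
      ext v ; rfl
    rw [this, ← Matrix.toLin'_apply', LinearMap.det_toLin']
  have hd2 : (LinearMap.det ((N.subtype).comp (e2 : (Fin n → ℤ) →ₗ[ℤ] N))).natAbs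
      = ∏ i, (snf.a i).natAbs := by
    set g := (N.subtype).comp (e2 : (Fin n → ℤ) →ₗ[ℤ] N) with hg
    have hga : ∀ i, g (snf.bM i) = snf.a (σ.symm i) • snf.bM i := by
      intro i
      have : g (snf.bM i) = (snf.bN (σ.symm i) : Fin n → ℤ) := by
        simp [hg, e2, Module.Basis.equiv_apply]
      rw [this, snf.snf]
      have hfσ : snf.f (σ.symm i) = i := σ.apply_symm_apply i
      rw [hfσ]
    have hmat : LinearMap.toMatrix snf.bM snf.bM g
        = Matrix.diagonal (fun i => snf.a (σ.symm i)) := by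
      ext i j
      rw [LinearMap.toMatrix_apply, hga, map_smul, Module.Basis.repr_self, Finsupp.smul_single,
        smul_eq_mul, mul_one]
      by_cases h : i = j
      · rw [h, Matrix.diagonal_apply_eq, Finsupp.single_eq_same]
      · rw [Matrix.diagonal_apply_ne _ h, Finsupp.single_eq_of_ne h]
    have : LinearMap.det g = ∏ i, snf.a (σ.symm i) := by
      rw [← LinearMap.det_toMatrix snf.bM, hmat, Matrix.det_diagonal]
    rw [this, Equiv.prod_comp σ.symm (fun i => snf.a i)]
    exact map_prod Int.natAbsHom snf.a Finset.univ
  have := Int.natAbs_eq_iff_associated.mpr hassoc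
  rw [← hd2, ← this, hd1]

lemma aux_cast_mulVec (c : Fin n → ℤ) (j : Fin n) :
    ((M.mulVec c) j : ℝ) = (M.map (Int.cast : ℤ → ℝ)).mulVec (fun i => (c i : ℝ)) j := by
  simp [Matrix.mulVec, dotProduct, Matrix.map_apply]

lemma aux_sum_form (x : Fin n → ℝ) (j : Fin n) :
    (M.map (Int.cast : ℤ → ℝ)).mulVec x j = ∑ i, x i * (M j i : ℝ) := by
  simp [Matrix.mulVec, dotProduct, Matrix.map_apply, mul_comm]

lemma aux_det_map_cast : (M.map (Int.cast : ℤ → ℝ)).det = (M.det : ℝ) :=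
  (RingHom.map_det (Int.castRingHom ℝ) M).symm

lemma aux_mulVec_inj_real (hd : M.det ≠ 0) {x y : Fin n → ℝ}
    (h : (M.map (Int.cast : ℤ → ℝ)).mulVec x = (M.map (Int.cast : ℤ → ℝ)).mulVec y) : x = y := by
  set Mr := M.map (Int.cast : ℤ → ℝ)
  have hu : IsUnit Mr.det := by
    rw [aux_det_map_cast]
    exact isUnit_iff_ne_zero.mpr (by exact_mod_cast hd)
  have := Matrix.invertibleOfIsUnitDet Mr hu
  calc x = (⅟Mr * Mr).mulVec x := by rw [invOf_mul_self, Matrix.one_mulVec]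
  _ = (⅟Mr).mulVec (Mr.mulVec x) := by rw [Matrix.mulVec_mulVec]
  _ = (⅟Mr).mulVec (Mr.mulVec y) := by rw [h]
  _ = (⅟Mr * Mr).mulVec y := by rw [Matrix.mulVec_mulVec]
  _ = y := by rw [invOf_mul_self, Matrix.one_mulVec]

lemma aux_set_eq (hd : M.det ≠ 0)
    (hN : ∀ v : Fin n → ℤ, (2 : ℤ) • v ∈ LinearMap.range M.mulVecLin) :
    parPoints M = {v | ∃ ε ∈ Eset M, ∀ j, 2 * v j = M.mulVec ε j} := by
  ext v
  constructor
  · rintro ⟨x, hx01, hx⟩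
    obtain ⟨c, hc⟩ := hN v
    rw [Matrix.mulVecLin_apply] at hc
    have hcx : (fun i => (c i : ℝ)) = fun i => 2 * x i := by
      apply aux_mulVec_inj_real M hd
      funext j
      rw [← aux_cast_mulVec, hc]
      rw [aux_sum_form]
      have : ∑ i, 2 * x i * (M j i : ℝ) = 2 * ∑ i, x i * (M j i : ℝ) := by
        rw [Finset.mul_sum]; congr 1; funext i; ring
      rw [this, ← hx]
      simp
    have hc01 : ∀ i, c i = 0 ∨ c i = 1 := by
      intro i
      have h1 : (c i : ℝ) = 2 * x i := congrFun hcx i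
      have h2 : (0 : ℝ) ≤ (c i : ℝ) := by rw [h1]; linarith [(hx01 i).1]
      have h3 : (c i : ℝ) < 2 := by rw [h1]; linarith [(hx01 i).2]
      have h2' : (0 : ℤ) ≤ c i := by exact_mod_cast h2
      have h3' : c i < 2 := by exact_mod_cast h3
      omega
    refine ⟨c, ⟨hc01, fun j => ⟨v j, ?_⟩⟩, fun j => ?_⟩
    · rw [hc]; simp [mul_comm]
    · rw [hc]; simp [mul_comm]
  · rintro ⟨ε, ⟨hε01, _⟩, h2⟩
    refine ⟨fun i => (ε i : ℝ) / 2, fun i => ?_, fun j => ?_⟩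
    · rcases hε01 i with h | h <;> simp only [h] <;> norm_num
    · have : (2 : ℝ) * (v j : ℝ) = ∑ i, (ε i : ℝ) * (M j i : ℝ) := by
        have h5 := h2 j
        have : ((2 * v j : ℤ) : ℝ) = ((M.mulVec ε j : ℤ) : ℝ) := by rw [h5]
        push_cast at this
        rw [this]
        rw [aux_cast_mulVec, aux_sum_form]
      have h4 : ∑ i, (ε i : ℝ) / 2 * (M j i : ℝ) = (∑ i, (ε i : ℝ) * (M j i : ℝ)) / 2 := by
        rw [Finset.sum_div]; congr 1; funext i; ring
      rw [h4, ← this]; ring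

lemma aux_card_par_eq_card_quot (hd : M.det ≠ 0) :
    Nat.card (parPoints M) = Nat.card ((Fin n → ℤ) ⧸ LinearMap.range M.mulVecLin) := by
  classical
  set N := LinearMap.range M.mulVecLin with hNdef
  set Mr := M.map (Int.cast : ℤ → ℝ) with hMr
  have hu : IsUnit Mr.det := by
    rw [hMr, aux_det_map_cast]
    exact isUnit_iff_ne_zero.mpr (by exact_mod_cast hd)
  have hinv := Matrix.invertibleOfIsUnitDet Mr hu
  refine Nat.card_congr (Equiv.ofBijective
    (fun v : parPoints M => Submodule.Quotient.mk (p := N) v.val) ⟨?_, ?_⟩)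
  · rintro ⟨v, xv, hxv01, hxv⟩ ⟨w, xw, hxw01, hxw⟩ h
    have hvw : v - w ∈ N := (Submodule.Quotient.eq N).mp h
    obtain ⟨c, hc⟩ := hvw
    rw [Matrix.mulVecLin_apply] at hc
    have hcx : (fun i => (c i : ℝ)) = fun i => xv i - xw i := by
      apply aux_mulVec_inj_real M hd
      funext j
      rw [← aux_cast_mulVec, hc]
      have h1 : Mr.mulVec (fun i => xv i - xw i) j
          = Mr.mulVec xv j - Mr.mulVec xw j := by
        simp [Matrix.mulVec, dotProduct, mul_sub, Finset.sum_sub_distrib]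
      rw [h1, aux_sum_form, aux_sum_form, ← hxv, ← hxw]
      push_cast
      simp
    have hc0 : c = 0 := by
      funext i
      rw [Pi.zero_apply]
      have h1 : (c i : ℝ) = xv i - xw i := congrFun hcx i
      have h2 : (-1 : ℝ) < (c i : ℝ) := by
        rw [h1]; linarith [(hxv01 i).1, (hxw01 i).2]
      have h3 : (c i : ℝ) < 1 := by
        rw [h1]; linarith [(hxv01 i).2, (hxw01 i).1]
      have h2' : (-1 : ℤ) < c i := by exact_mod_cast h2
      have h3' : c i < 1 := by exact_mod_cast h3
      omega
    rw [hc0] at hc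
    simp only [Matrix.mulVec_zero] at hc
    exact Subtype.ext (sub_eq_zero.mp hc.symm)
  · intro u
    obtain ⟨u', rfl⟩ := Submodule.Quotient.mk_surjective N u
    set y : Fin n → ℝ := (⅟Mr).mulVec (fun i => (u' i : ℝ)) with hy
    have hyu : Mr.mulVec y = fun i => (u' i : ℝ) := by
      rw [hy, Matrix.mulVec_mulVec, mul_invOf_self, Matrix.one_mulVec]
    set c : Fin n → ℤ := fun i => ⌊y i⌋ with hcdef
    refine ⟨⟨u' - M.mulVec c, fun i => Int.fract (y i),
      fun i => ⟨Int.fract_nonneg _, Int.fract_lt_one _⟩, fun j => ?_⟩, ?_⟩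
    · rw [← aux_sum_form]
      have h1 : Mr.mulVec (fun i => Int.fract (y i)) j
          = Mr.mulVec y j - Mr.mulVec (fun i => (c i : ℝ)) j := by
        have : (fun i => Int.fract (y i)) = y - fun i => (c i : ℝ) := by
          funext i
          rw [Pi.sub_apply, hcdef]
          exact (Int.self_sub_floor (y i)).symm
        rw [this]
        simp [Matrix.mulVec, dotProduct, mul_sub, Finset.sum_sub_distrib]
      rw [h1, hyu, ← aux_cast_mulVec]
      push_cast
      simp
    · rw [Submodule.Quotient.eq]
      have : u' - M.mulVec c - u' = -(M.mulVec c) := by ring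
      rw [this]
      exact neg_mem ⟨c, by rw [Matrix.mulVecLin_apply]⟩

end Aux

theorem stmt13 {n : ℕ} (M : Matrix (Fin n) (Fin n) ℤ)
    (hbasis : LinearIndependent ℤ (fun i : Fin n => fun j : Fin n => M j i))
    (hN : ∀ v : Fin n → ℤ, (2 : ℤ) • v ∈ LinearMap.range M.mulVecLin) :
    parPoints M = {v | ∃ ε ∈ Eset M, ∀ j, 2 * v j = M.mulVec ε j} ∧
      Nat.card (parPoints M) = M.det.natAbs ∧
      (∃ k₀ : ℕ, M.det.natAbs = 2 ^ k₀ ∧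
        Nat.card ((Fin n → ℤ) ⧸ LinearMap.range M.mulVecLin) = 2 ^ k₀) := by
  classical
  -- construct the matrix B with M * B = 2 • 1
  have hch : ∀ j : Fin n, ∃ c : Fin n → ℤ, M.mulVec c = (2 : ℤ) • Pi.single j 1 := by
    intro j
    obtain ⟨c, hc⟩ := hN (Pi.single j 1)
    exact ⟨c, hc⟩
  choose B hB using hch
  set Bmat : Matrix (Fin n) (Fin n) ℤ := Matrix.of (fun i j => B j i) with hBmat
  have hMB : M * Bmat = (2 : ℤ) • 1 := by
    ext i j
    have : (M * Bmat) i j = M.mulVec (B j) i := by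
      simp [Matrix.mul_apply, Matrix.mulVec, dotProduct, hBmat]
    rw [this, hB j]
    simp [Pi.single_apply, Matrix.one_apply]
  have hdet2 : M.det * Bmat.det = 2 ^ n := by
    have := congrArg Matrix.det hMB
    rwa [Matrix.det_mul, Matrix.det_smul, Matrix.det_one, mul_one, Fintype.card_fin] at this
  have hd : M.det ≠ 0 := by
    intro h
    rw [h, zero_mul] at hdet2
    exact absurd hdet2.symm (by positivity)
  -- injectivity of mulVecLin
  have hker : ∀ g : Fin n → ℤ, M.mulVec g = 0 → g = 0 := by
    intro g hg
    have h0 : ∑ i, g i • (fun j => M j i) = (0 : Fin n → ℤ) := by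
      funext j
      simp only [Finset.sum_apply, Pi.smul_apply, smul_eq_mul, Pi.zero_apply]
      rw [show (0 : ℤ) = M.mulVec g j by rw [hg]; rfl]
      simp [Matrix.mulVec, dotProduct, mul_comm]
    funext i
    exact Fintype.linearIndependent_iff.mp hbasis g h0 i
  have hinj : Function.Injective M.mulVecLin := by
    intro a b hab
    have h1 : M.mulVec (a - b) = 0 := by
      rw [Matrix.mulVec_sub]
      rw [show M.mulVec a = M.mulVecLin a from rfl, show M.mulVec b = M.mulVecLin b from rfl, hab]
      simp
    have := hker _ h1
    exact sub_eq_zero.mp this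
  have hcard := aux_card_quot_eq_detAbs M hinj
  -- the power of two
  have hdvdZ : M.det ∣ 2 ^ n := ⟨Bmat.det, hdet2.symm⟩
  have hdvd : M.det.natAbs ∣ 2 ^ n := by
    have h := Int.natAbs_dvd_natAbs.mpr hdvdZ
    rwa [show ((2:ℤ) ^ n).natAbs = 2 ^ n by rw [Int.natAbs_pow]; rfl] at h
  obtain ⟨k₀, _, hdk⟩ := (Nat.dvd_prime_pow Nat.prime_two).mp hdvd
  refine ⟨aux_set_eq M hd hN, ?_, k₀, hdk, ?_⟩
  · rw [aux_card_par_eq_card_quot M hd, hcard]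
  · rw [hcard, hdk]
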